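/- Let G be a directed graph and let P be a directed path p₀, …, p_{n-1} in G. For indices j < i, call the pair (i,j) a detour if (1) there is a walk in G from p_i to p_j that avoids all vertices p_k with k < j, and (2) there is no i' > i for which a walk from p_{i'} to p_j avoiding all vertices p_k with k < j exists. Let H be the directed graph on the index set {0, …, n-1} whose edges are k → k+1 for all k < n-1 together with an edge i → j for every detour (i,j). Then for all indices f < b the following holds: letting S_G be the set of indices q > f such that there is a walk in G from p_b to p_q avoiding all vertices p_k with k ≤ f, and S_H the set of indices q > f such that there is a walk in H from b to q avoiding all indices k ≤ f, one has S_H ⊆ S_G, S_G is nonempty if and only if S_H is nonempty, and when they are nonempty they have the same least element. -/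

import Mathlib

/-- A walk in the directed graph with edge relation `E`: a nonempty list of vertices
starting at `u`, ending at `v`, with every consecutive pair an edge. -/
def IsWalk {V : Type*} (E : V → V → Prop) (l : List V) (u v : V) : Prop :=
  l ≠ [] ∧ l.head? = some u ∧ l.getLast? = some v ∧ l.Chain' E

/-- For indices `j < i` of the directed path `p`, `(i,j)` is a detour if there is a walk
in `G` from `p i` to `p j` avoiding all vertices `p k` with `k < j`, and no `i' > i`
admits such a walk. -/
def Detour {V : Type*} {n : ℕ} (E : V → V → Prop) (p : Fin n → V) (i j : Fin n) : Prop :=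
  j < i ∧
  (∃ l, IsWalk E l (p i) (p j) ∧ ∀ x ∈ l, ∀ k : Fin n, k < j → x ≠ p k) ∧
  ∀ i' : Fin n, i < i' →
    ¬ ∃ l, IsWalk E l (p i') (p j) ∧ ∀ x ∈ l, ∀ k : Fin n, k < j → x ≠ p k

/-- The auxiliary graph `H` on the index set `{0, …, n-1}`: edges `k → k+1` for all
`k < n-1`, together with an edge `i → j` for every detour `(i,j)`. -/
def Hrel {V : Type*} {n : ℕ} (E : V → V → Prop) (p : Fin n → V) (a b : Fin n) : Prop :=
  (a.val + 1 = b.val) ∨ Detour E p a b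

open Relation

lemma walk_to_rtg {V : Type*} (E : V → V → Prop) (P : V → Prop) :
    ∀ (t : List V) (a v : V), (a :: t).getLast? = some v → List.Chain' E (a :: t) →
      (∀ x ∈ a :: t, P x) → P a ∧ ReflTransGen (fun x y => E x y ∧ P y) a v := by
  intro t
  induction t with
  | nil =>
    intro a v hlast _ hP
    obtain rfl : a = v := by simpa using hlast
    exact ⟨hP _ (by simp), .refl⟩
  | cons w t ih =>
    intro a v hlast hch hP
    replace hch := List.isChain_cons_cons.mp hch
    have hlast' : (w :: t).getLast? = some v := by
      simpa [List.getLast?_cons_cons] using hlast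
    obtain ⟨hPw, hr⟩ := ih w v hlast' hch.2 (fun x hx => hP x (List.mem_cons_of_mem _ hx))
    exact ⟨hP a (by simp), .head ⟨hch.1, hPw⟩ hr⟩

lemma walk_iff {V : Type*} (E : V → V → Prop) (P : V → Prop) (u v : V) :
    (∃ l, IsWalk E l u v ∧ ∀ x ∈ l, P x) ↔
      P u ∧ ReflTransGen (fun a c => E a c ∧ P c) u v := by
  constructor
  · rintro ⟨l, ⟨hne, hhd, hlast, hch⟩, hP⟩
    match l, hne with
    | a :: t, _ =>
      obtain rfl : a = u := by simpa using hhd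
      exact walk_to_rtg E P t a v hlast hch hP
  · rintro ⟨hPu, h⟩
    induction h with
    | refl => exact ⟨[u], ⟨by simp, by simp, by simp, by exact List.isChain_singleton _⟩, by simpa⟩
    | @tail b c hb hs ih =>
      obtain ⟨l, ⟨hne, hhd, hlast, hch⟩, hP⟩ := ih
      refine ⟨l ++ [c], ⟨by simp, ?_, ?_, ?_⟩, ?_⟩
      · match l, hne with
        | a :: t, _ => simpa using hhd
      · simp [List.getLast?_concat]
      · refine List.IsChain.append hch (by simp) ?_
        intro x hx y hy
        obtain rfl : c = y := by simpa using hy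
        have : b = x := by rw [hlast] at hx; simpa using hx
        subst this
        exact hs.1
      · intro x hx
        rcases List.mem_append.mp hx with h | h
        · exact hP x h
        · obtain rfl : x = c := by simpa using h
          exact hs.2

lemma rtg_last {V : Type*} {r : V → V → Prop} {P : V → Prop} {u v : V}
    (h : ReflTransGen (fun a c => r a c ∧ P c) u v) : u = v ∨ P v := by
  rcases h.cases_tail with h | ⟨c, _, hs⟩
  · exact Or.inl h.symm
  · exact Or.inr hs.2

lemma rtg_or {V : Type*} (r : V → V → Prop) (Q : V → Prop) {u v : V}
    (h : ReflTransGen r u v) :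
    ReflTransGen (fun a c => r a c ∧ Q c) u v ∨ ∃ w, ¬ Q w ∧ ReflTransGen r u w := by
  induction h with
  | refl => exact Or.inl .refl
  | @tail b c hb hs ih =>
    rcases ih with ih | ⟨w, hw, hr⟩
    · by_cases hQ : Q c
      · exact Or.inl (ih.tail ⟨hs, hQ⟩)
      · exact Or.inr ⟨c, hQ, hb.tail hs⟩
    · exact Or.inr ⟨w, hw, hr⟩

/-- For all indices `f < b`, the set of indices `q > f` reachable from `b`
in `H` avoiding indices `≤ f` is contained in the set of indices `q > f` whose vertex is
reachable from `p b` in `G` avoiding the vertices `p k` with `k ≤ f`; the two sets are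
simultaneously nonempty, and have the same least element when nonempty. -/
theorem stmt_2 {V : Type*} [Fintype V] {n : ℕ} (E : V → V → Prop)
    (p : Fin n → V) (hinj : Function.Injective p)
    (hch : ∀ (i : ℕ) (h : i + 1 < n),
      E (p ⟨i, Nat.lt_of_succ_lt h⟩) (p ⟨i + 1, h⟩))
    (f b : Fin n) (hfb : f < b) :
    let SG : Set (Fin n) := {q | f < q ∧
      ∃ l, IsWalk E l (p b) (p q) ∧ ∀ x ∈ l, ∀ k : Fin n, k ≤ f → x ≠ p k}
    let SH : Set (Fin n) := {q | f < q ∧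
      ∃ l, IsWalk (Hrel E p) l b q ∧ ∀ x ∈ l, ¬ x ≤ f}
    SH ⊆ SG ∧ (SG.Nonempty ↔ SH.Nonempty) ∧ ∀ q, IsLeast SG q ↔ IsLeast SH q := by
  intro SG SH
  classical
  have hPb : ∀ k : Fin n, k ≤ f → p b ≠ p k := by
    intro k hk heq
    exact absurd hk (not_le.mpr (hinj heq ▸ hfb))
  have hmemG : ∀ q : Fin n, q ∈ SG ↔ f < q ∧
      ReflTransGen (fun a c => E a c ∧ ∀ k : Fin n, k ≤ f → c ≠ p k) (p b) (p q) := by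
    intro q
    constructor
    · rintro ⟨h1, hw⟩
      exact ⟨h1, ((walk_iff E (fun x => ∀ k : Fin n, k ≤ f → x ≠ p k) _ _).mp hw).2⟩
    · rintro ⟨h1, hw⟩
      exact ⟨h1, (walk_iff E (fun x => ∀ k : Fin n, k ≤ f → x ≠ p k) _ _).mpr ⟨hPb, hw⟩⟩
  have hmemH : ∀ q : Fin n, q ∈ SH ↔ f < q ∧
      ReflTransGen (fun a c => Hrel E p a c ∧ ¬ c ≤ f) b q := by
    intro q
    constructor
    · rintro ⟨h1, hw⟩
      exact ⟨h1, ((walk_iff (Hrel E p) (fun x => ¬ x ≤ f) _ _).mp hw).2⟩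
    · rintro ⟨h1, hw⟩
      exact ⟨h1, (walk_iff (Hrel E p) (fun x => ¬ x ≤ f) _ _).mpr ⟨not_le.mpr hfb, hw⟩⟩
  have hedge : ∀ a c : Fin n, Hrel E p a c → f < c →
      ReflTransGen (fun x y => E x y ∧ ∀ k : Fin n, k ≤ f → y ≠ p k) (p a) (p c) := by
    intro a c hrel hc
    rcases hrel with h | hdet
    · have hc' : a.val + 1 < n := h ▸ c.isLt
      have hE : E (p a) (p c) := by
        have h2 := hch a.val hc'
        have e2 : (⟨a.val + 1, hc'⟩ : Fin n) = c := Fin.ext h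
        rwa [e2] at h2
      refine ReflTransGen.single ⟨hE, ?_⟩
      intro k hk heq
      exact absurd hk (not_le.mpr (hinj heq ▸ hc))
    · obtain ⟨hlt, ⟨l, hw, hav⟩, _⟩ := hdet
      have h2 := (walk_iff E (fun x => ∀ k : Fin n, k < c → x ≠ p k) (p a) (p c)).mp ⟨l, hw, hav⟩
      refine ReflTransGen.mono ?_ _ _ h2.2
      rintro x y ⟨hE, hQ⟩
      exact ⟨hE, fun k hk => hQ k (lt_of_le_of_lt hk hc)⟩
  have hHtoG : ∀ q : Fin n, ReflTransGen (fun a c => Hrel E p a c ∧ ¬ c ≤ f) b q →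
      ReflTransGen (fun x y => E x y ∧ ∀ k : Fin n, k ≤ f → y ≠ p k) (p b) (p q) := by
    intro q h
    induction h with
    | refl => exact .refl
    | @tail x y hx hs ih => exact ih.trans (hedge x y hs.1 (not_le.mp hs.2))
  have hsub : SH ⊆ SG := by
    intro q hq
    rw [hmemH] at hq
    rw [hmemG]
    exact ⟨hq.1, hHtoG q hq.2⟩
  have hbSH : b ∈ SH := (hmemH b).mpr ⟨hfb, .refl⟩
  have hbSG : b ∈ SG := hsub hbSH
  have hkey : ∀ m : Fin n, IsLeast SG m → m ∈ SH := by
    intro m hm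
    obtain ⟨hfm, hreach⟩ := (hmemG m).mp hm.1
    have hmb : m ≤ b := hm.2 hbSG
    rcases eq_or_lt_of_le hmb with rfl | hmb
    · exact hbSH
    have hQ : ReflTransGen (fun x y => E x y ∧ ∀ k : Fin n, k < m → y ≠ p k)
        (p b) (p m) := by
      rcases rtg_or _ (fun x => ∀ k : Fin n, k < m → x ≠ p k) hreach with h | ⟨w, hw, hwr⟩
      · refine ReflTransGen.mono ?_ _ _ h
        rintro x y ⟨⟨hE, _⟩, hQ⟩
        exact ⟨hE, hQ⟩
      · exfalso
        push_neg at hw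
        obtain ⟨k, hk, rfl⟩ := hw
        rcases rtg_last hwr with heq | hPw
        · have hbk : b = k := hinj heq
          rw [← hbk] at hk
          exact absurd hk (not_lt.mpr hmb.le)
        · have hfk : f < k := by
            by_contra hle
            exact hPw k (not_lt.mp hle) rfl
          have hkSG : k ∈ SG := (hmemG k).mpr ⟨hfk, hwr⟩
          exact absurd (hm.2 hkSG) (not_le.mpr hk)
    have hQb : ∀ k : Fin n, k < m → p b ≠ p k := by
      intro k hk heq
      have hbk : b = k := hinj heq
      rw [← hbk] at hk
      exact absurd hk (not_lt.mpr hmb.le)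
    obtain ⟨i, hiT, hmax⟩ := Set.exists_max_image
      {i : Fin n | (∀ k : Fin n, k < m → p i ≠ p k) ∧
        ReflTransGen (fun x y => E x y ∧ ∀ k : Fin n, k < m → y ≠ p k) (p i) (p m)}
      id (Set.toFinite _) ⟨b, ⟨hQb, hQ⟩⟩
    have hbi : b ≤ i := hmax b ⟨hQb, hQ⟩
    have hdet : Detour E p i m := by
      refine ⟨lt_of_lt_of_le hmb hbi, ?_, ?_⟩
      · exact (walk_iff E (fun x => ∀ k : Fin n, k < m → x ≠ p k) (p i) (p m)).mpr
          ⟨hiT.1, hiT.2⟩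
      · rintro i' hi' ⟨l, hw, hav⟩
        have h2 := (walk_iff E (fun x => ∀ k : Fin n, k < m → x ≠ p k) (p i') (p m)).mp
          ⟨l, hw, hav⟩
        exact absurd (hmax i' ⟨h2.1, h2.2⟩) (not_le.mpr hi')
    have hchain : ∀ d : ℕ, ∀ hd : b.val + d < n,
        ReflTransGen (fun a c => Hrel E p a c ∧ ¬ c ≤ f) b ⟨b.val + d, hd⟩ := by
      intro d
      induction d with
      | zero =>
        intro hd
        have he : (⟨b.val + 0, hd⟩ : Fin n) = b := Fin.ext (by simp)
        rw [he]
      | succ d ih =>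
        intro hd
        have hd' : b.val + d < n := by omega
        refine (ih hd').tail ⟨Or.inl rfl, ?_⟩
        have hfbv : f.val < b.val := hfb
        rw [Fin.le_def]
        simp only [not_le]
        omega
    have hchi : ReflTransGen (fun a c => Hrel E p a c ∧ ¬ c ≤ f) b i := by
      have hble : b.val ≤ i.val := hbi
      have hd : b.val + (i.val - b.val) < n := by have := i.isLt; omega
      have he : (⟨b.val + (i.val - b.val), hd⟩ : Fin n) = i := Fin.ext (by simp; omega)
      exact he ▸ hchain _ hd
    have hHm : ReflTransGen (fun a c => Hrel E p a c ∧ ¬ c ≤ f) b m :=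
      hchi.tail ⟨Or.inr hdet, not_le.mpr hfm⟩
    exact (hmemH m).mpr ⟨hfm, hHm⟩
  refine ⟨hsub, ⟨fun _ => ⟨b, hbSH⟩, fun _ => ⟨b, hbSG⟩⟩, ?_⟩
  intro q
  constructor
  · intro h
    exact ⟨hkey q h, fun a ha => h.2 (hsub ha)⟩
  · intro h
    obtain ⟨m, hmSG, hmin⟩ := Set.exists_min_image SG id (Set.toFinite SG) ⟨b, hbSG⟩
    have hmL : IsLeast SG m := ⟨hmSG, hmin⟩
    have hqm : q = m := h.unique ⟨hkey m hmL, fun a ha => hmin a (hsub ha)⟩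
    rw [hqm]
    exact hmL
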